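/- Let U be a random vector in ℝ^q and V a random vector in ℝ^q on the same probability space, and let 𝕍 be a symmetric positive definite q×q matrix. Suppose that for all a, η ∈ ℝ^q, 𝔼[exp(i⟨a, U⟩ + ⟨η, V⟩ − ½ ηᵀ𝕍⁻¹η)] = exp(i⟨a, η⟩)·𝔼[exp(i⟨a, U⟩)] (with all expectations finite). Then for every a ∈ ℝ^q, 𝔼[exp(i⟨a, U⟩)] = 𝔼[exp(i⟨a, U − 𝕍V⟩)]·exp(−½ aᵀ𝕍a). In particular, the law of U is the convolution of the law of U − 𝕍V with the Gaussian law N(0, 𝕍). -/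

import Mathlib

open Matrix MeasureTheory

lemma aux_abs_le (x : ℝ) : |x| ≤ Real.exp x + Real.exp (-x) := by
  rcases abs_cases x with ⟨h, _⟩ | ⟨h, _⟩ <;> rw [h] <;>
    nlinarith [Real.add_one_le_exp x, Real.add_one_le_exp (-x), Real.exp_pos x, Real.exp_pos (-x)]

lemma aux_bound (x u s : ℝ) (hs : |s - u| < 1) :
    |x| * Real.exp (s * x) ≤
      Real.exp ((u + 2) * x) + 2 * Real.exp (u * x) + Real.exp ((u - 2) * x) := by
  have h1 : |x| * Real.exp (s * x) ≤ Real.exp ((1 + s) * x) + Real.exp ((s - 1) * x) := by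
    have := aux_abs_le x
    calc |x| * Real.exp (s * x) ≤ (Real.exp x + Real.exp (-x)) * Real.exp (s * x) := by
          apply mul_le_mul_of_nonneg_right this (Real.exp_pos _).le
      _ = Real.exp ((1 + s) * x) + Real.exp ((s - 1) * x) := by
          rw [add_mul, ← Real.exp_add, ← Real.exp_add]; ring_nf
  have h2 : Real.exp ((1 + s) * x) ≤ Real.exp ((u + 2) * x) + Real.exp (u * x) := by
    rcases le_or_gt 0 x with hx | hx
    · have : (1 + s) * x ≤ (u + 2) * x := by
        apply mul_le_mul_of_nonneg_right _ hx
        cases abs_lt.mp hs; linarith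
      nlinarith [Real.exp_le_exp.mpr this, Real.exp_pos (u * x)]
    · have : (1 + s) * x ≤ u * x := by
        apply mul_le_mul_of_nonpos_right _ hx.le
        cases abs_lt.mp hs; linarith
      nlinarith [Real.exp_le_exp.mpr this, Real.exp_pos ((u + 2) * x)]
  have h3 : Real.exp ((s - 1) * x) ≤ Real.exp (u * x) + Real.exp ((u - 2) * x) := by
    rcases le_or_gt 0 x with hx | hx
    · have : (s - 1) * x ≤ u * x := by
        apply mul_le_mul_of_nonneg_right _ hx
        cases abs_lt.mp hs; linarith
      nlinarith [Real.exp_le_exp.mpr this, Real.exp_pos ((u - 2) * x)]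
    · have : (s - 1) * x ≤ (u - 2) * x := by
        apply mul_le_mul_of_nonpos_right _ hx.le
        cases abs_lt.mp hs; linarith
      nlinarith [Real.exp_le_exp.mpr this, Real.exp_pos (u * x)]
  linarith

/-- Algebraic core of the Hájek–Le Cam convolution theorem: if the joint
characteristic-function identity
`𝔼[exp(i⟨a,U⟩ + ⟨η,V⟩ − ½ ηᵀ𝕍⁻¹η)] = exp(i⟨a,η⟩) 𝔼[exp(i⟨a,U⟩)]` holds for all
`a, η ∈ ℝ^q`, then `𝔼[exp(i⟨a,U⟩)] = 𝔼[exp(i⟨a, U − 𝕍V⟩)] · exp(−½ aᵀ𝕍a)`. -/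
theorem stmt8 {Ω : Type*} [MeasurableSpace Ω] (P : Measure Ω)
    [IsProbabilityMeasure P] (q : ℕ)
    (U V : Ω → (Fin q → ℝ)) (𝕍 : Matrix (Fin q) (Fin q) ℝ)
    (h𝕍 : 𝕍.PosDef) (h𝕍symm : 𝕍.IsSymm)
    (hint : ∀ a η : Fin q → ℝ, Integrable (fun ω : Ω =>
      Complex.exp (Complex.I * (a ⬝ᵥ U ω : ℝ) + (η ⬝ᵥ V ω : ℝ)
        - ((1 : ℂ) / 2) * (η ⬝ᵥ 𝕍⁻¹.mulVec η : ℝ))) P)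
    (hchar : ∀ a η : Fin q → ℝ,
      ∫ ω : Ω, Complex.exp (Complex.I * (a ⬝ᵥ U ω : ℝ) + (η ⬝ᵥ V ω : ℝ)
          - ((1 : ℂ) / 2) * (η ⬝ᵥ 𝕍⁻¹.mulVec η : ℝ)) ∂P
        = Complex.exp (Complex.I * (a ⬝ᵥ η : ℝ))
            * ∫ ω : Ω, Complex.exp (Complex.I * (a ⬝ᵥ U ω : ℝ)) ∂P) :
    ∀ a : Fin q → ℝ,
      ∫ ω : Ω, Complex.exp (Complex.I * (a ⬝ᵥ U ω : ℝ)) ∂P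
        = (∫ ω : Ω, Complex.exp (Complex.I * (a ⬝ᵥ (U ω - 𝕍.mulVec (V ω)) : ℝ)) ∂P)
            * Complex.exp (-((1 : ℂ) / 2) * (a ⬝ᵥ 𝕍.mulVec a : ℝ)) := by
  intro a
  set b : Fin q → ℝ := 𝕍.mulVec a with hb
  set c : ℝ := a ⬝ᵥ b with hc
  have hInv : 𝕍⁻¹.mulVec b = a := by
    rw [hb, Matrix.mulVec_mulVec, Matrix.nonsing_inv_mul _ h𝕍.det_pos.ne'.isUnit,
      Matrix.one_mulVec]
  have hcb : b ⬝ᵥ 𝕍⁻¹.mulVec b = c := by rw [hInv, hc, dotProduct_comm]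
  have hbV : ∀ w : Fin q → ℝ, a ⬝ᵥ 𝕍.mulVec w = b ⬝ᵥ w := by
    intro w
    rw [Matrix.dotProduct_mulVec, hb]
    congr 1
    rw [← h𝕍symm.eq, Matrix.vecMul_transpose, h𝕍symm.eq]
  set X : Ω → ℝ := fun ω => b ⬝ᵥ V ω with hX
  set c₀ : Ω → ℂ := fun ω => Complex.exp (Complex.I * (a ⬝ᵥ U ω : ℝ)) with hc₀
  -- integrability of exp(u ⬝ X) for all real u
  have hre : ∀ (r s t : ℝ),
      (Complex.I * (r : ℂ) + (s : ℝ) - ((1 : ℂ) / 2) * (t : ℝ)).re = s - t / 2 := by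
    intro r s t
    simp [Complex.add_re, Complex.sub_re, Complex.mul_re]
    ring
  have hdot : ∀ (u : ℝ) (w : Fin q → ℝ), (u • b) ⬝ᵥ w = u * (b ⬝ᵥ w) := by
    intro u w; rw [smul_dotProduct]; rfl
  have hquad : ∀ u : ℝ, (u • b) ⬝ᵥ 𝕍⁻¹.mulVec (u • b) = u * u * c := by
    intro u
    rw [Matrix.mulVec_smul, dotProduct_smul, hdot, hcb, smul_eq_mul]; ring
  have hIu : ∀ u : ℝ, Integrable (fun ω => Real.exp (u * X ω)) P := by
    intro u
    have h := (hint a (u • b)).norm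
    have : (fun ω => Real.exp (u * X ω))
        = fun ω => Real.exp (u * u * c / 2) *
          ‖Complex.exp (Complex.I * (a ⬝ᵥ U ω : ℝ) + ((u • b) ⬝ᵥ V ω : ℝ)
            - ((1 : ℂ) / 2) * ((u • b) ⬝ᵥ 𝕍⁻¹.mulVec (u • b) : ℝ))‖ := by
      funext ω
      rw [Complex.norm_exp, hre, hdot, hquad, ← Real.exp_add]
      ring_nf
      rfl
    rw [this]
    exact h.const_mul _
  -- measurability
  have hc₀meas : AEStronglyMeasurable c₀ P := by
    have h := (hint a 0).1
    simpa [hc₀] using h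
  have hXmeas : AEMeasurable X P := by
    have h := (hint a b).1.norm.aemeasurable
    have heq : (fun ω => Real.log ‖Complex.exp (Complex.I * (a ⬝ᵥ U ω : ℝ) + (b ⬝ᵥ V ω : ℝ)
        - ((1 : ℂ) / 2) * (b ⬝ᵥ 𝕍⁻¹.mulVec b : ℝ))‖ + c / 2) = X := by
      funext ω
      rw [Complex.norm_exp, hre, hcb, Real.log_exp]
      ring
    rw [← heq]
    exact (Real.measurable_log.comp_aemeasurable h).add_const _
  have hFmeas : ∀ s : ℂ, AEStronglyMeasurable (fun ω => c₀ ω * Complex.exp (s * X ω)) P := by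
    intro s
    exact hc₀meas.mul ((Complex.measurable_exp.comp_aemeasurable
      ((Complex.measurable_ofReal.comp_aemeasurable hXmeas).const_mul s)).aestronglyMeasurable)
  have hnorm : ∀ (s : ℂ) (ω : Ω), ‖c₀ ω * Complex.exp (s * X ω)‖ = Real.exp (s.re * X ω) := by
    intro s ω
    rw [norm_mul, hc₀]
    simp [Complex.norm_exp, Complex.mul_re]
  have hFint : ∀ s : ℂ, Integrable (fun ω => c₀ ω * Complex.exp (s * X ω)) P := by
    intro s
    refine (hIu s.re).mono' (hFmeas s) (Filter.Eventually.of_forall fun ω => ?_)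
    rw [hnorm]
  -- F is differentiable
  set F : ℂ → ℂ := fun s => ∫ ω, c₀ ω * Complex.exp (s * X ω) ∂P with hF
  have hFdiff : Differentiable ℂ F := by
    intro s₀
    have key := hasDerivAt_integral_of_dominated_loc_of_deriv_le (μ := P) (x₀ := s₀)
      (F := fun s ω => c₀ ω * Complex.exp (s * X ω))
      (F' := fun s ω => c₀ ω * (X ω * Complex.exp (s * X ω)))
      (bound := fun ω => Real.exp ((s₀.re + 2) * X ω) + 2 * Real.exp (s₀.re * X ω)
        + Real.exp ((s₀.re - 2) * X ω))
      (Metric.ball_mem_nhds s₀ one_pos)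
      (Filter.Eventually.of_forall fun s => hFmeas s)
      (hFint s₀)
      (hc₀meas.mul (((Complex.measurable_ofReal.comp_aemeasurable hXmeas).mul
        ((Complex.measurable_exp.comp_aemeasurable
          ((Complex.measurable_ofReal.comp_aemeasurable hXmeas).const_mul s₀)))).aestronglyMeasurable))
      (Filter.Eventually.of_forall fun ω s hs => by
        have h1 : ‖c₀ ω * ((X ω : ℂ) * Complex.exp (s * X ω))‖
            = |X ω| * Real.exp (s.re * X ω) := by
          rw [norm_mul, norm_mul, hc₀]
          simp [Complex.norm_exp, Complex.mul_re]
        rw [h1]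
        apply aux_bound
        have : |(s - s₀).re| ≤ ‖s - s₀‖ := Complex.abs_re_le_norm _
        simp only [Complex.sub_re] at this
        calc |s.re - s₀.re| ≤ ‖s - s₀‖ := this
          _ < 1 := by simpa [Metric.mem_ball, dist_eq_norm] using hs)
      (((hIu (s₀.re + 2)).add ((hIu s₀.re).const_mul 2)).add (hIu (s₀.re - 2)))
      (Filter.Eventually.of_forall fun ω s _ => by
        have h := (((hasDerivAt_id s).mul_const ((X ω : ℂ))).cexp).const_mul (c₀ ω)
        simp only [id_eq] at h
        exact h.congr_deriv (by ring))
    exact key.2.differentiableAt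
  -- G
  set φ : ℂ := ∫ ω, Complex.exp (Complex.I * (a ⬝ᵥ U ω : ℝ)) ∂P with hφ
  set G : ℂ → ℂ := fun s => Complex.exp (Complex.I * s * c + s ^ 2 * c / 2) * φ with hG
  have hGdiff : Differentiable ℂ G := by
    apply Differentiable.mul _ (differentiable_const _)
    apply Differentiable.cexp
    fun_prop
  -- equality on reals
  have hreal : ∀ t : ℝ, F t = G t := by
    intro t
    have h := hchar a (t • b)
    have heq : (fun ω => Complex.exp (Complex.I * (a ⬝ᵥ U ω : ℝ) + ((t • b) ⬝ᵥ V ω : ℝ)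
        - ((1 : ℂ) / 2) * ((t • b) ⬝ᵥ 𝕍⁻¹.mulVec (t • b) : ℝ)))
        = fun ω => Complex.exp (-(((1:ℂ)/2) * ((t * t * c : ℝ) : ℂ)))
          * (c₀ ω * Complex.exp ((t : ℂ) * X ω)) := by
      funext ω
      rw [hquad, hdot, hc₀, ← Complex.exp_add, ← Complex.exp_add]
      push_cast
      ring_nf
      rfl
    rw [heq, integral_const_mul] at h
    have hadot : a ⬝ᵥ (t • b) = t * c := by rw [dotProduct_smul, hc]; rfl
    rw [hadot] at h
    -- h : exp(-(1/2) t²c) * F t = exp(I t c) * φ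
    show (∫ ω, c₀ ω * Complex.exp ((t:ℂ) * X ω) ∂P)
        = Complex.exp (Complex.I * (t:ℂ) * (c:ℂ) + (t:ℂ) ^ 2 * (c:ℂ) / 2) * φ
    calc (∫ ω, c₀ ω * Complex.exp ((t:ℂ) * X ω) ∂P)
        = Complex.exp (((1:ℂ)/2) * ((t * t * c : ℝ) : ℂ))
          * (Complex.exp (-(((1:ℂ)/2) * ((t * t * c : ℝ) : ℂ)))
            * ∫ ω, c₀ ω * Complex.exp ((t:ℂ) * X ω) ∂P) := by
          rw [← mul_assoc, ← Complex.exp_add]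
          simp
      _ = Complex.exp (((1:ℂ)/2) * ((t * t * c : ℝ) : ℂ))
          * (Complex.exp (Complex.I * ((t * c : ℝ) : ℂ)) * φ) := by rw [h]
      _ = Complex.exp (Complex.I * (t:ℂ) * (c:ℂ) + (t:ℂ) ^ 2 * (c:ℂ) / 2) * φ := by
          rw [← mul_assoc, ← Complex.exp_add]
          congr 2
          push_cast
          ring
  -- identity theorem
  have hFan : AnalyticOnNhd ℂ F Set.univ :=
    hFdiff.differentiableOn.analyticOnNhd isOpen_univ
  have hGan : AnalyticOnNhd ℂ G Set.univ :=
    hGdiff.differentiableOn.analyticOnNhd isOpen_univ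
  have hfreq : ∃ᶠ z in nhdsWithin (0 : ℂ) {(0:ℂ)}ᶜ, F z = G z := by
    have htend : Filter.Tendsto (fun n : ℕ => ((1 / (n + 1) : ℝ) : ℂ)) Filter.atTop
        (nhdsWithin (0 : ℂ) {(0:ℂ)}ᶜ) := by
      rw [tendsto_nhdsWithin_iff]
      constructor
      · have h0 : Filter.Tendsto (fun n : ℕ => (1 / (n + 1) : ℝ)) Filter.atTop (nhds 0) :=
          tendsto_one_div_add_atTop_nhds_zero_nat
        have := (Complex.continuous_ofReal.tendsto 0).comp h0
        simpa [Function.comp_def] using this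
      · refine Filter.Eventually.of_forall fun n => ?_
        simp only [Set.mem_compl_iff, Set.mem_singleton_iff]
        intro hz
        rw [Complex.ofReal_eq_zero] at hz
        have hpos : (0:ℝ) < 1 / (n + 1) := by positivity
        linarith
    exact htend.frequently (Filter.Frequently.of_forall fun n => hreal _)
  have heqFG : F (-Complex.I) = G (-Complex.I) :=
    hFan.eqOn_of_preconnected_of_frequently_eq hGan isPreconnected_univ (Set.mem_univ 0)
      hfreq (Set.mem_univ _)
  -- conclude
  have hFmI : (∫ ω : Ω, Complex.exp (Complex.I * (a ⬝ᵥ (U ω - 𝕍.mulVec (V ω)) : ℝ)) ∂P)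
      = F (-Complex.I) := by
    rw [hF]
    congr 1
    funext ω
    rw [hc₀, ← Complex.exp_add]
    congr 1
    have hd : a ⬝ᵥ (U ω - 𝕍.mulVec (V ω)) = a ⬝ᵥ U ω - X ω := by
      rw [dotProduct_sub, hbV]
    rw [hd]
    push_cast
    ring
  rw [hFmI, heqFG]
  show φ = Complex.exp (Complex.I * -Complex.I * (c:ℂ) + (-Complex.I) ^ 2 * (c:ℂ) / 2) * φ
      * Complex.exp (-((1:ℂ)/2) * (c:ℂ))
  have hone : Complex.exp (Complex.I * -Complex.I * (c:ℂ) + (-Complex.I) ^ 2 * (c:ℂ) / 2)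
      * Complex.exp (-((1:ℂ)/2) * (c:ℂ)) = 1 := by
    have harg : Complex.I * -Complex.I * (c:ℂ) + (-Complex.I) ^ 2 * (c:ℂ) / 2
        + -((1:ℂ)/2) * (c:ℂ) = 0 := by
      linear_combination (-(c:ℂ)/2) * Complex.I_sq
    rw [← Complex.exp_add, harg, Complex.exp_zero]
  rw [mul_right_comm, hone, one_mul]
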